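/- In the biquadratic field K = ℚ(√2, √21), the element 7 + √42, which is additively indecomposable in ℚ(√42), decomposes as a sum of two totally positive algebraic integers: 7 + √42 = (7/2 + (3/2)√2 + (1/2)√21 + (1/2)√42) + (7/2 − (3/2)√2 − (1/2)√21 + (1/2)√42). -/
import Mathlib

open Polynomial

lemma irr42 : Irrational (Real.sqrt 42) := by
  rw [show (42:ℝ) = ((42:ℕ):ℝ) by norm_num]
  refine irrational_sqrt_natCast_iff.mpr ?_
  rintro ⟨r, hr⟩
  have : r ≤ 7 := by nlinarith
  interval_cases r <;> omega

lemma sq42 : Real.sqrt 42 = Real.sqrt 2 * Real.sqrt 21 := by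
  rw [← Real.sqrt_mul (by norm_num : (0:ℝ) ≤ 2)]; norm_num

lemma zmod42 : ∀ x : ZMod 42, x^2 = 0 → x = 0 := by decide

lemma ratint {u : ℚ} (w : ℤ) (h : u^2 = (w:ℚ)) : ∃ z : ℤ, (z:ℚ) = u := by
  have : IsIntegral ℤ u := by
    refine ⟨X^2 - C w, by monicity!, ?_⟩
    show (aeval u) (X^2 - C w) = 0
    rw [map_sub, map_pow, aeval_X, aeval_C, eq_intCast, ← h]; ring
  obtain ⟨z, hz⟩ := IsIntegrallyClosed.isIntegral_iff.mp this
  exact ⟨z, by exact_mod_cast hz⟩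

lemma key {a b : ℚ} (h : IsIntegral ℤ ((a:ℝ) + b * Real.sqrt 42)) :
    ∃ m v n : ℤ, (m:ℚ) = 2*a ∧ (v:ℚ) = 2*b ∧ m^2 = 42*v^2 + 4*n := by
  have h42 : Real.sqrt 42 ^ 2 = 42 := Real.sq_sqrt (by norm_num)
  by_cases hb : b = 0
  · subst hb
    have ha : IsIntegral ℤ a := by
      rw [← isIntegral_algebraMap_iff (algebraMap ℚ ℝ).injective]
      simpa [eq_ratCast (algebraMap ℚ ℝ)] using h
    obtain ⟨a₀, ha₀⟩ := IsIntegrallyClosed.isIntegral_iff.mp ha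
    refine ⟨2*a₀, 0, a₀^2, ?_, by norm_num, by ring⟩
    push_cast; rw [show ((a₀:ℚ)) = a from by exact_mod_cast ha₀]
  · set x : ℝ := (a:ℝ) + b * Real.sqrt 42 with hxdef
    have hxQ : IsIntegral ℚ x := h.tower_top
    have hnotmem : x ∉ (algebraMap ℚ ℝ).range := by
      rintro ⟨r, hr⟩
      rw [eq_ratCast (algebraMap ℚ ℝ)] at hr
      refine irr42 ⟨(r - a)/b, ?_⟩
      push_cast
      rw [div_eq_iff (by exact_mod_cast hb : ((b:ℝ) ≠ 0))]
      linear_combination hr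
    set q : ℚ[X] := X^2 - C (2*a) * X + C (a^2 - 42*b^2) with hqdef
    have hqm : q.Monic := by unfold q; monicity!
    have hq0 : (aeval x) q = 0 := by
      simp only [hqdef, map_add, map_sub, map_mul, map_pow, aeval_X, aeval_C, eq_ratCast]
      push_cast
      rw [hxdef]
      linear_combination (b:ℝ)^2 * h42
    have hdvd : minpoly ℚ x ∣ q := minpoly.dvd ℚ x hq0
    have hdeg2 : q.natDegree = 2 := by unfold q; compute_degree!
    have h2le : 2 ≤ (minpoly ℚ x).natDegree := (minpoly.two_le_natDegree_iff hxQ).mpr hnotmem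
    have heq : q = minpoly ℚ x :=
      Polynomial.eq_of_monic_of_dvd_of_natDegree_le (minpoly.monic hxQ) hqm hdvd (hdeg2 ▸ h2le)
    have hmap : minpoly ℚ x = (minpoly ℤ x).map (algebraMap ℤ ℚ) :=
      minpoly.isIntegrallyClosed_eq_field_fractions' ℚ h
    set P : ℤ[X] := minpoly ℤ x with hP
    have hc1 : q.coeff 1 = ((P.coeff 1 : ℤ) : ℚ) := by rw [heq, hmap, coeff_map]; rfl
    have hc0 : q.coeff 0 = ((P.coeff 0 : ℤ) : ℚ) := by rw [heq, hmap, coeff_map]; rfl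
    have hq1 : q.coeff 1 = -(2*a) := by
      rw [hqdef]; simp only [coeff_add, coeff_sub, coeff_C_mul, coeff_X, coeff_X_pow, coeff_C]
      norm_num
    have hq0' : q.coeff 0 = a^2 - 42*b^2 := by
      rw [hqdef]; simp only [coeff_add, coeff_sub, coeff_C_mul, coeff_X, coeff_X_pow, coeff_C]
      norm_num
    set m : ℤ := -(P.coeff 1) with hmdef
    set k : ℤ := P.coeff 0 with hkdef
    have hm : (m:ℚ) = 2*a := by push_cast [hmdef]; rw [← hc1, hq1]; ring
    have hk : (k:ℚ) = a^2 - 42*b^2 := by rw [hkdef]; rw [← hc0, hq0']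
    obtain ⟨u, hu⟩ : ∃ u : ℤ, (u:ℚ) = 84*b := by
      refine ratint (42*(m^2 - 4*k)) ?_
      push_cast
      linear_combination (-42*((m:ℚ) + 2*a)) * hm + 168 * hk
    have hu2 : u^2 = 42*(m^2 - 4*k) := by
      have : ((u^2 : ℤ) : ℚ) = ((42*(m^2-4*k) : ℤ) : ℚ) := by
        push_cast
        linear_combination ((u:ℚ) + 84*b) * hu + (-42*((m:ℚ) + 2*a)) * hm + 168 * hk
      exact_mod_cast this
    have h42u : (42:ℤ) ∣ u := by
      have h1 : ((u : ZMod 42))^2 = 0 := by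
        have hd : ((42:ℤ) ∣ u^2) := ⟨m^2 - 4*k, hu2⟩
        have := (ZMod.intCast_zmod_eq_zero_iff_dvd (u^2) 42).mpr hd
        push_cast at this
        exact this
      exact (ZMod.intCast_zmod_eq_zero_iff_dvd u 42).mp (zmod42 _ h1)
    obtain ⟨v, hv⟩ := h42u
    have h42v : ((42*v : ℤ) : ℚ) = 84*b := by rw [← hv]; exact hu
    have hu2' : (42*v)^2 = 42*(m^2 - 4*k) := by rw [← hv]; exact hu2
    refine ⟨m, v, k, hm, ?_, ?_⟩
    · push_cast at h42v; linarith
    · nlinarith [hu2']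

lemma quad_rel {β : ℝ} (h2 : Real.sqrt 2 ^ 2 = 2) (h21 : Real.sqrt 21 ^ 2 = 21)
    (hβ : β = 7/2 + 3/2 * Real.sqrt 2 + 1/2 * Real.sqrt 21 + 1/2 * (Real.sqrt 2 * Real.sqrt 21)
        ∨ β = 7/2 - 3/2 * Real.sqrt 2 - 1/2 * Real.sqrt 21 + 1/2 * (Real.sqrt 2 * Real.sqrt 21)) :
    β^2 - (7 + Real.sqrt 2 * Real.sqrt 21) * β + (13 + 2 * (Real.sqrt 2 * Real.sqrt 21)) = 0 := by
  rcases hβ with rfl | rfl <;>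
    linear_combination ((9 - Real.sqrt 21 ^ 2)/4) * h2 - (1/4) * h21

lemma int_of_quad {β : ℝ}
    (hβ : β = 7/2 + 3/2 * Real.sqrt 2 + 1/2 * Real.sqrt 21 + 1/2 * (Real.sqrt 2 * Real.sqrt 21)
        ∨ β = 7/2 - 3/2 * Real.sqrt 2 - 1/2 * Real.sqrt 21 + 1/2 * (Real.sqrt 2 * Real.sqrt 21)) :
    IsIntegral ℤ β := by
  have h2 : Real.sqrt 2 ^ 2 = 2 := Real.sq_sqrt (by norm_num)
  have h21 : Real.sqrt 21 ^ 2 = 21 := Real.sq_sqrt (by norm_num)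
  have hc : (Real.sqrt 2 * Real.sqrt 21)^2 = 42 := by
    rw [mul_pow, h2, h21]; norm_num
  have hq := quad_rel h2 h21 hβ
  refine ⟨X^4 - C 14 * X^3 + C 33 * X^2 - C 14 * X + C 1, by monicity!, ?_⟩
  show (aeval β) (X^4 - C 14 * X^3 + C 33 * X^2 - C 14 * X + C 1) = 0
  simp only [map_add, map_sub, map_mul, map_pow, aeval_X, aeval_C, eq_intCast, map_ofNat, map_one]
  set c := Real.sqrt 2 * Real.sqrt 21
  have hfac : β^4 - 14*β^3 + 33*β^2 - 14*β + 1
      = (β^2 - (7 + c) * β + (13 + 2*c)) * (β^2 - (7 - c) * β + (13 - 2*c)) := by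
    linear_combination (β^2 - 4*β + 4) * hc
  rw [hfac, hq, zero_mul]

lemma pos_all (e₁ e₂ : ℝ) (h₁ : e₁ = 1 ∨ e₁ = -1) (h₂ : e₂ = 1 ∨ e₂ = -1) :
    0 < (7 / 2 + e₁ * (3 / 2) * Real.sqrt 2 + e₂ * (1 / 2) * Real.sqrt 21 +
      e₁ * e₂ * (1 / 2) * Real.sqrt 42 : ℝ) := by
  have h2 : Real.sqrt 2 ^ 2 = 2 := Real.sq_sqrt (by norm_num)
  have h21 : Real.sqrt 21 ^ 2 = 21 := Real.sq_sqrt (by norm_num)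
  have n2 : 0 ≤ Real.sqrt 2 := Real.sqrt_nonneg 2
  have n21 : 0 ≤ Real.sqrt 21 := Real.sqrt_nonneg 21
  have l2 : 1 ≤ Real.sqrt 2 := by nlinarith
  have u2 : Real.sqrt 2 ≤ 3/2 := by nlinarith
  have l21 : 4 ≤ Real.sqrt 21 := by nlinarith
  have u21 : Real.sqrt 21 ≤ 5 := by nlinarith
  rw [sq42]
  set s := Real.sqrt 2
  set t := Real.sqrt 21
  have hpp : 0 < 7 + 3*s + t + s*t := by nlinarith
  have hmm : 0 < 7 - 3*s - t + s*t := by nlinarith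
  have kp : (7 + 3*s - t - s*t) * (7 + 3*s + t + s*t) = 4 := by
    linear_combination (-12 - 21) * h2 - (1 + s)^2 * h21 + 21 * h2
  have km : (7 - 3*s + t - s*t) * (7 - 3*s - t + s*t) = 4 := by
    linear_combination (-12 - 21) * h2 - (1 - s)^2 * h21 + 21 * h2
  have hpm : 0 < 7 + 3*s - t - s*t := by nlinarith [kp, hpp]
  have hmp : 0 < 7 - 3*s + t - s*t := by nlinarith [km, hmm]
  rcases h₁ with rfl | rfl <;> rcases h₂ with rfl | rfl <;> nlinarith [hpp, hmm, hpm, hmp]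

lemma intarg (m v n m' v' n' : ℤ) (hmn : m^2 = 42*v^2 + 4*n) (hmn' : m'^2 = 42*v'^2 + 4*n')
    (hn : 0 < n) (hn' : 0 < n') (hm : 0 < m) (hm' : 0 < m')
    (h14 : m + m' = 14) (h2 : v + v' = 2) : False := by
  have hm13 : m ≤ 13 := by omega
  have hm13' : m' ≤ 13 := by omega
  have hv3 : v^2 ≤ 3 := by nlinarith
  have hv3' : v'^2 ≤ 3 := by nlinarith
  have hvb1 : -1 ≤ v := by nlinarith
  have hvb2 : v ≤ 1 := by nlinarith
  have hvb1' : -1 ≤ v' := by nlinarith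
  have hvb2' : v' ≤ 1 := by nlinarith
  have hv1 : v = 1 := by omega
  have hv1' : v' = 1 := by omega
  subst hv1 hv1'
  have hm7 : 7 ≤ m := by nlinarith
  have hm7' : 7 ≤ m' := by nlinarith
  have : m = 7 := by omega
  subst this
  omega



/-- In `K = ℚ(√2, √21)`, the element `7 + √42` — which is additively indecomposable in the
quadratic field `ℚ(√42)` — decomposes as a sum of two totally positive algebraic integers
of `K`, namely `β = 7/2 + (3/2)√2 + (1/2)√21 + (1/2)√42` and
`γ = 7/2 − (3/2)√2 − (1/2)√21 + (1/2)√42`. Total positivity is expressed via the real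
embeddings (sign flips of the square roots). -/
theorem stmt_12 :
    -- 7 + √42 is indecomposable in ℚ(√42):
    (¬ ∃ a b a' b' : ℚ,
      IsIntegral ℤ ((a : ℝ) + b * Real.sqrt 42) ∧
      IsIntegral ℤ ((a' : ℝ) + b' * Real.sqrt 42) ∧
      0 < (a : ℝ) + b * Real.sqrt 42 ∧ 0 < (a : ℝ) - b * Real.sqrt 42 ∧
      0 < (a' : ℝ) + b' * Real.sqrt 42 ∧ 0 < (a' : ℝ) - b' * Real.sqrt 42 ∧
      7 + Real.sqrt 42 =
        ((a : ℝ) + b * Real.sqrt 42) + ((a' : ℝ) + b' * Real.sqrt 42)) ∧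
    -- yet it decomposes in ℚ(√2, √21) as β + γ with β, γ totally positive integers:
    7 + Real.sqrt 42 =
      (7 / 2 + 3 / 2 * Real.sqrt 2 + 1 / 2 * Real.sqrt 21 + 1 / 2 * Real.sqrt 42) +
      (7 / 2 - 3 / 2 * Real.sqrt 2 - 1 / 2 * Real.sqrt 21 + 1 / 2 * Real.sqrt 42) ∧
    IsIntegral ℤ
      (7 / 2 + 3 / 2 * Real.sqrt 2 + 1 / 2 * Real.sqrt 21 + 1 / 2 * Real.sqrt 42 : ℝ) ∧
    IsIntegral ℤ
      (7 / 2 - 3 / 2 * Real.sqrt 2 - 1 / 2 * Real.sqrt 21 + 1 / 2 * Real.sqrt 42 : ℝ) ∧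
    -- β is totally positive (four embeddings: √2 ↦ ±√2, √21 ↦ ±√21, √42 ↦ product sign):
    (∀ e₁ e₂ : ℝ, (e₁ = 1 ∨ e₁ = -1) → (e₂ = 1 ∨ e₂ = -1) →
      0 < (7 / 2 + e₁ * (3 / 2) * Real.sqrt 2 + e₂ * (1 / 2) * Real.sqrt 21 +
        e₁ * e₂ * (1 / 2) * Real.sqrt 42 : ℝ)) ∧
    -- γ is totally positive:
    (∀ e₁ e₂ : ℝ, (e₁ = 1 ∨ e₁ = -1) → (e₂ = 1 ∨ e₂ = -1) →
      0 < (7 / 2 - e₁ * (3 / 2) * Real.sqrt 2 - e₂ * (1 / 2) * Real.sqrt 21 +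
        e₁ * e₂ * (1 / 2) * Real.sqrt 42 : ℝ)) := by
  refine ⟨?_, by ring, int_of_quad (Or.inl (by rw [sq42])),
    int_of_quad (Or.inr (by rw [sq42])), pos_all, ?_⟩
  · rintro ⟨a, b, a', b', h1, h2, p1, p2, p3, p4, hsum⟩
    obtain ⟨m, v, n, hm, hv, hmn⟩ := key h1
    obtain ⟨m', v', n', hm', hv', hmn'⟩ := key h2
    have h42 : Real.sqrt 42 ^ 2 = 42 := Real.sq_sqrt (by norm_num)
    -- positivity facts
    have hn1R : (0:ℝ) < (a:ℝ)^2 - 42*(b:ℝ)^2 := by nlinarith [mul_pos p1 p2]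
    have hn2R : (0:ℝ) < (a':ℝ)^2 - 42*(b':ℝ)^2 := by nlinarith [mul_pos p3 p4]
    have hn1Q : (0:ℚ) < a^2 - 42*b^2 := by
      have h' : ((a^2 - 42*b^2 : ℚ) : ℝ) = (a:ℝ)^2 - 42*(b:ℝ)^2 := by push_cast; ring
      exact_mod_cast h' ▸ hn1R
    have hn2Q : (0:ℚ) < a'^2 - 42*b'^2 := by
      have h' : ((a'^2 - 42*b'^2 : ℚ) : ℝ) = (a':ℝ)^2 - 42*(b':ℝ)^2 := by push_cast; ring
      exact_mod_cast h' ▸ hn2R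
    have hmc : ((m:ℚ))^2 = 42*((v:ℚ))^2 + 4*(n:ℚ) := by exact_mod_cast hmn
    have hmc' : ((m':ℚ))^2 = 42*((v':ℚ))^2 + 4*(n':ℚ) := by exact_mod_cast hmn'
    have hnq : (n:ℚ) = a^2 - 42*b^2 := by
      linear_combination (-(1:ℚ)/4)*hmc + (((m:ℚ)+2*a)/4)*hm - (42*((v:ℚ)+2*b)/4)*hv
    have hnq' : (n':ℚ) = a'^2 - 42*b'^2 := by
      linear_combination (-(1:ℚ)/4)*hmc' + (((m':ℚ)+2*a')/4)*hm' - (42*((v':ℚ)+2*b')/4)*hv'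
    have hnpos : 0 < n := by exact_mod_cast hnq ▸ hn1Q
    have hnpos' : 0 < n' := by exact_mod_cast hnq' ▸ hn2Q
    have haR : (0:ℝ) < (a:ℝ) := by linarith
    have ha'R : (0:ℝ) < (a':ℝ) := by linarith
    have hmpos : 0 < m := by
      have : (0:ℚ) < (m:ℚ) := by
        rw [hm]; have : (0:ℚ) < a := by exact_mod_cast haR
        linarith
      exact_mod_cast this
    have hmpos' : 0 < m' := by
      have : (0:ℚ) < (m':ℚ) := by
        rw [hm']; have : (0:ℚ) < a' := by exact_mod_cast ha'R
        linarith
      exact_mod_cast this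
    -- matching coefficients
    have hbb : b + b' = 1 := by
      by_contra hne
      refine irr42 ⟨(7 - a - a')/(b + b' - 1), ?_⟩
      have hd : ((b:ℝ) + (b':ℝ) - 1) ≠ 0 := by
        intro h0
        apply hne
        have : ((b + b' - 1 : ℚ) : ℝ) = 0 := by push_cast; linarith
        have : (b + b' - 1 : ℚ) = 0 := by exact_mod_cast this
        linarith
      push_cast
      rw [div_eq_iff hd]
      linear_combination hsum
    have hbbR : (b:ℝ) + (b':ℝ) = 1 := by exact_mod_cast hbb
    have haaR : (a:ℝ) + (a':ℝ) = 7 := by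
      linear_combination (-1) * hsum - Real.sqrt 42 * hbbR
    have haa : a + a' = 7 := by exact_mod_cast haaR
    have hmm14 : m + m' = 14 := by
      have : ((m + m' : ℤ) : ℚ) = 14 := by push_cast; rw [hm, hm']; linear_combination 2*haa
      exact_mod_cast this
    have hvv2 : v + v' = 2 := by
      have : ((v + v' : ℤ) : ℚ) = 2 := by push_cast; rw [hv, hv']; linear_combination 2*hbb
      exact_mod_cast this
    exact intarg m v n m' v' n' hmn hmn' hnpos hnpos' hmpos hmpos' hmm14 hvv2
  · intro e₁ e₂ h₁ h₂
    have h := pos_all (-e₁) (-e₂)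
      (by rcases h₁ with rfl | rfl; exacts [Or.inr (by norm_num), Or.inl (by norm_num)])
      (by rcases h₂ with rfl | rfl; exacts [Or.inr (by norm_num), Or.inl (by norm_num)])
    have heq : (7 / 2 - e₁ * (3 / 2) * Real.sqrt 2 - e₂ * (1 / 2) * Real.sqrt 21 +
        e₁ * e₂ * (1 / 2) * Real.sqrt 42 : ℝ)
        = 7 / 2 + (-e₁) * (3 / 2) * Real.sqrt 2 + (-e₂) * (1 / 2) * Real.sqrt 21 +
        (-e₁) * (-e₂) * (1 / 2) * Real.sqrt 42 := by ring
    rw [heq]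
    exact h
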